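/- Let (q, p, H) solve the Painlevé III′ Hamiltonian system with parameters v1, v2 ∈ ℂ on an open set U ⊆ ℂ with 0 ∉ U. Let V := {t ∈ ℂ : t ≠ 0 and t² ∈ U}, and define Q(t) := q(t²)/t and P(t) := t·p(t²) on V. Then (Q, P) solves the Painlevé III Hamiltonian system with the same parameters (v1, v2) and η0 = η∞ = 1 on V, and its Hamiltonian H_III satisfies t·H_III(t) = 2·s·H(s) − q(s)·p(s) with s = t², for all t ∈ V. -/

import Mathlib

open Complex

/-- `(q, p, H)` solves the Painlevé III′ Hamiltonian system with parameters
`v1, v2` on an open set `U ⊆ ℂ` with `0 ∉ U`. -/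
def SolvesPIII' (v1 v2 : ℂ) (U : Set ℂ) (q p H : ℂ → ℂ) : Prop :=
  IsOpen U ∧ (0 : ℂ) ∉ U ∧
    DifferentiableOn ℂ q U ∧ DifferentiableOn ℂ p U ∧
    (∀ s ∈ U, s * H s =
      q s ^ 2 * p s ^ 2 - (q s ^ 2 + v1 * q s - s) * p s
        + (1 / 2) * (v1 + v2) * q s) ∧
    (∀ s ∈ U, s * deriv q s = 2 * q s ^ 2 * p s - q s ^ 2 - v1 * q s + s) ∧
    (∀ s ∈ U, s * deriv p s =
      -2 * q s * p s ^ 2 + 2 * q s * p s + v1 * p s - (1 / 2) * (v1 + v2))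

/-- `(q, p, H)` solves the Painlevé III Hamiltonian system with parameters
`v1, v2, η0, ηinf` on an open set `U ⊆ ℂ` with `0 ∉ U`. -/
def SolvesPIII (v1 v2 η0 ηinf : ℂ) (U : Set ℂ) (q p H : ℂ → ℂ) : Prop :=
  IsOpen U ∧ (0 : ℂ) ∉ U ∧
    DifferentiableOn ℂ q U ∧ DifferentiableOn ℂ p U ∧
    (∀ t ∈ U, t * H t =
      2 * q t ^ 2 * p t ^ 2
        - (2 * ηinf * t * q t ^ 2 + (2 * v1 + 1) * q t - 2 * η0 * t) * p t
        + ηinf * (v1 + v2) * t * q t) ∧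
    (∀ t ∈ U, t * deriv q t =
      4 * q t ^ 2 * p t - 2 * ηinf * t * q t ^ 2 - (2 * v1 + 1) * q t + 2 * η0 * t) ∧
    (∀ t ∈ U, t * deriv p t =
      -4 * q t * p t ^ 2 + 4 * ηinf * t * q t * p t + (2 * v1 + 1) * p t
        - ηinf * (v1 + v2) * t)

/-- The change of variables `Q(t) = q(t²)/t`, `P(t) = t·p(t²)` maps a solution
of the Painlevé III′ Hamiltonian system with parameters `(v1, v2)` to a
solution of the Painlevé III Hamiltonian system with the same parameters and
`η0 = ηinf = 1`, with `t·H_III(t) = 2s·H(s) − q(s)p(s)` where `s = t²`. -/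
theorem painleveIIIprime_to_painleveIII (v1 v2 : ℂ) (U : Set ℂ)
    (q p H : ℂ → ℂ)
    (hsol : SolvesPIII' v1 v2 U q p H)
    (V : Set ℂ) (hV : V = {t : ℂ | t ≠ 0 ∧ t ^ 2 ∈ U})
    (Q P : ℂ → ℂ)
    (hQ : ∀ t ∈ V, Q t = q (t ^ 2) / t)
    (hP : ∀ t ∈ V, P t = t * p (t ^ 2)) :
    ∃ HIII : ℂ → ℂ,
      SolvesPIII v1 v2 1 1 V Q P HIII ∧
      ∀ t ∈ V, t * HIII t = 2 * (t ^ 2) * H (t ^ 2) - q (t ^ 2) * p (t ^ 2) := by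
  obtain ⟨hUo, hU0, hq, hp, hH, hq', hp'⟩ := hsol
  have hmem : ∀ t ∈ V, t ≠ 0 ∧ t ^ 2 ∈ U := fun t ht => by rw [hV] at ht; exact ht
  have hVo : IsOpen V := by
    rw [hV]
    have : {t : ℂ | t ≠ 0 ∧ t ^ 2 ∈ U} = {(0:ℂ)}ᶜ ∩ (fun t : ℂ => t ^ 2) ⁻¹' U := by
      ext t; simp [Set.mem_setOf_eq]
    rw [this]
    exact isOpen_compl_singleton.inter (hUo.preimage (by fun_prop))
  have hV0 : (0 : ℂ) ∉ V := fun h => (hmem 0 h).1 rfl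
  -- pointwise derivative facts
  have hsq : ∀ t : ℂ, HasDerivAt (fun t : ℂ => t ^ 2) (2 * t) t := fun t => by
    simpa using hasDerivAt_pow 2 t
  have hqA : ∀ t ∈ V, HasDerivAt (fun t : ℂ => q (t ^ 2)) (deriv q (t ^ 2) * (2 * t)) t :=
    fun t ht =>
      ((hq.differentiableAt (hUo.mem_nhds (hmem t ht).2)).hasDerivAt).comp t (hsq t)
  have hpA : ∀ t ∈ V, HasDerivAt (fun t : ℂ => p (t ^ 2)) (deriv p (t ^ 2) * (2 * t)) t :=
    fun t ht =>
      ((hp.differentiableAt (hUo.mem_nhds (hmem t ht).2)).hasDerivAt).comp t (hsq t)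
  have hQD : ∀ t ∈ V, HasDerivAt Q
      ((deriv q (t ^ 2) * (2 * t) * t - q (t ^ 2) * 1) / t ^ 2) t := by
    intro t ht
    have h := (hqA t ht).div (hasDerivAt_id t) (hmem t ht).1
    exact h.congr_of_eventuallyEq
      (Filter.eventuallyEq_of_mem (hVo.mem_nhds ht) hQ)
  have hPD : ∀ t ∈ V, HasDerivAt P
      (1 * p (t ^ 2) + t * (deriv p (t ^ 2) * (2 * t))) t := by
    intro t ht
    have h := (hasDerivAt_id t).mul (hpA t ht)
    exact h.congr_of_eventuallyEq
      (Filter.eventuallyEq_of_mem (hVo.mem_nhds ht) hP)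
  refine ⟨fun t => (2 * t ^ 2 * H (t ^ 2) - q (t ^ 2) * p (t ^ 2)) / t, ?_, ?_⟩
  · refine ⟨hVo, hV0, fun t ht => ((hQD t ht).differentiableAt).differentiableWithinAt,
      fun t ht => ((hPD t ht).differentiableAt).differentiableWithinAt, ?_, ?_, ?_⟩
    · intro t ht
      obtain ⟨ht0, htU⟩ := hmem t ht
      have hHt : t * ((2 * t ^ 2 * H (t ^ 2) - q (t ^ 2) * p (t ^ 2)) / t)
          = 2 * t ^ 2 * H (t ^ 2) - q (t ^ 2) * p (t ^ 2) := by field_simp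
      rw [hHt]
      have hq2 : q (t ^ 2) = t * Q t := by rw [hQ t ht]; field_simp
      have hp2 : p (t ^ 2) = P t / t := by rw [hP t ht]; field_simp
      have h := hH (t ^ 2) htU
      rw [hq2, hp2] at h ⊢
      have h2 : t ^ 2 * H (t ^ 2) = Q t ^ 2 * P t ^ 2 - t * Q t ^ 2 * P t
          - v1 * Q t * P t + t * P t + 1 / 2 * (v1 + v2) * t * Q t := by
        rw [h]; field_simp; ring
      have hqp : t * Q t * (P t / t) = Q t * P t := by field_simp
      rw [hqp]
      linear_combination 2 * h2
    · intro t ht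
      obtain ⟨ht0, htU⟩ := hmem t ht
      rw [(hQD t ht).deriv, hQ t ht, hP t ht]
      have h := hq' (t ^ 2) htU
      field_simp
      linear_combination 2 * h
    · intro t ht
      obtain ⟨ht0, htU⟩ := hmem t ht
      rw [(hPD t ht).deriv, hQ t ht, hP t ht]
      have h := hp' (t ^ 2) htU
      field_simp
      linear_combination 2 * h
  · intro t ht
    obtain ⟨ht0, htU⟩ := hmem t ht
    field_simp
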